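/- Let d, n be positive natural numbers, a : Fin d → Fin n → Bool, and k, k' : Fin n with k ≠ k'. Write 𝟙_k = proofSeq a k true, 𝟘_k = proofSeq a k false, 𝟙_{k'} = proofSeq a k' true and 𝟘_{k'} = proofSeq a k' false. Then P_{1,0}(𝟙_k, k, k') = P_{1,0}(𝟘_{k'}, k, k') and P_{0,1}(𝟘_k, k, k') = P_{0,1}(𝟙_{k'}, k, k'). (Proposition 2: if a news aggregator receives outcome 1 (resp. 0) with a consistent proof, and another aggregator presents the opposite outcome 0 (resp. 1) with a consistent proof, then the two proofs must contain exactly the same tuples carrying the value 1 (resp. 0) in position k and the opposite value 0 (resp. 1) in position k'.) -/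

import Mathlib

/-- The consistent proof sequence built from the bit sequence `a`, the position `k`
and the verification outcome `c`. -/
def proofSeq {d n : ℕ} (a : Fin d → Fin n → Bool) (k : Fin n) (c : Bool) :
    Fin d → Option (Fin n → Bool) :=
  fun l => if a l k = c then some (a l) else none

/-- `P_{x,y}(p, k, k')`: the set of indices of non-cryptic tuples of `p` whose bit
in position `k` equals `x` and whose bit in position `k'` equals `y`. -/
def Pxy {d n : ℕ} (p : Fin d → Option (Fin n → Bool)) (k k' : Fin n) (x y : Bool) :
    Finset (Fin d) :=
  Finset.univ.filter (fun l => ∃ t, p l = some t ∧ t k = x ∧ t k' = y)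

/-- Proposition 2: writing `𝟙_k = proofSeq a k true`, `𝟘_k = proofSeq a k false`,
`𝟙_{k'} = proofSeq a k' true`, `𝟘_{k'} = proofSeq a k' false`, the two consistent
proofs for opposite verification outcomes contain exactly the same tuples carrying
`1` in position `k` and `0` in position `k'` (and symmetrically). -/
theorem consistent_proofs_opposite_outcomes (d n : ℕ) (hd : 0 < d) (hn : 0 < n)
    (a : Fin d → Fin n → Bool) (k k' : Fin n) (hkk' : k ≠ k') :
    Pxy (proofSeq a k true) k k' true false =
      Pxy (proofSeq a k' false) k k' true false ∧
    Pxy (proofSeq a k false) k k' false true =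
      Pxy (proofSeq a k' true) k k' false true := by
  constructor <;>
  · ext l
    rw [Pxy, Pxy, Finset.mem_filter, Finset.mem_filter]
    simp only [Pxy, proofSeq, Finset.mem_filter, Finset.mem_univ, true_and]
    constructor <;> rintro ⟨t, ht, h1, h2⟩ <;>
    · split at ht <;> simp_all
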